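/- Let P be a nonempty finite multiset of points of the closed unit ball B(0,1) ⊆ ℝ^d, let e > 0 with |P| ≥ 2e, and let n ∈ ℝ, S ∈ ℝ^d and V ∈ ℝ satisfy |n − |P|| ≤ e, ‖S − ∑_{p∈P} p‖ ≤ e and |V − ∑_{p∈P} ‖p‖²| ≤ e. Then n > 0 and | (V − ‖S‖²/n) − (∑_{p∈P} ‖p‖² − ‖∑_{p∈P} p‖²/|P|) | ≤ 12e. In particular, the quantity V − ‖S‖²/n estimates the optimal 1-means cost ∑_{p∈P} ‖p − μ(P)‖² up to an additive error of 12e. -/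

import Mathlib

/-- **Estimating the 1-means cost from noisy statistics.** Let `P` be a nonempty finite
multiset of points of the closed unit ball of `ℝ^d`, let `e > 0` with `|P| ≥ 2e`, and
let `n ∈ ℝ`, `S ∈ ℝ^d` and `V ∈ ℝ` satisfy `|n − |P|| ≤ e`, `‖S − ∑_{p∈P} p‖ ≤ e` and
`|V − ∑_{p∈P} ‖p‖²| ≤ e`.  Then `n > 0` and
`|(V − ‖S‖²/n) − (∑_{p∈P} ‖p‖² − ‖∑_{p∈P} p‖²/|P|)| ≤ 12e`; in particular `V − ‖S‖²/n`
estimates the optimal 1-means cost `∑_{p∈P} ‖p − μ(P)‖²` up to an additive error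
of `12e`. -/
theorem noisy_cost_estimate {d : ℕ} (P : Multiset (EuclideanSpace ℝ (Fin d)))
    (hP : P ≠ 0)
    (hball : ∀ p ∈ P, p ∈ Metric.closedBall (0 : EuclideanSpace ℝ (Fin d)) 1)
    (e : ℝ) (he : 0 < e) (hcard : 2 * e ≤ (P.card : ℝ))
    (n : ℝ) (hn : |n - (P.card : ℝ)| ≤ e)
    (S : EuclideanSpace ℝ (Fin d)) (hS : ‖S - P.sum‖ ≤ e)
    (V : ℝ) (hV : |V - (P.map (fun p => ‖p‖ ^ 2)).sum| ≤ e) :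
    0 < n ∧
      |(V - ‖S‖ ^ 2 / n)
          - ((P.map (fun p => ‖p‖ ^ 2)).sum - ‖P.sum‖ ^ 2 / P.card)| ≤ 12 * e := by
  set m : ℝ := (P.card : ℝ) with hm
  set a : ℝ := ‖S‖ with ha
  set b : ℝ := ‖P.sum‖ with hb
  set Sv : ℝ := (P.map (fun p => ‖p‖ ^ 2)).sum with hSv
  have hm1 : (1 : ℝ) ≤ m := by
    have : 1 ≤ P.card := Multiset.card_pos.mpr hP
    rw [hm]; exact_mod_cast this
  have hm0 : (0 : ℝ) < m := by linarith
  obtain ⟨hn1, hn2⟩ := abs_le.mp hn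
  have hnlo : m / 2 ≤ n := by linarith
  have hnpos : 0 < n := by linarith
  -- ‖P.sum‖ ≤ m
  have hbm : b ≤ m := by
    have h1 : b ≤ (P.map (fun p => ‖p‖)).sum := norm_multiset_sum_le P
    have h2 : (P.map (fun p => ‖p‖)).sum ≤ (P.map (fun p => ‖p‖)).card • (1 : ℝ) := by
      apply Multiset.sum_le_card_nsmul
      intro x hx
      obtain ⟨p, hp, rfl⟩ := Multiset.mem_map.mp hx
      have := hball p hp
      simpa [Metric.mem_closedBall, dist_zero_right] using this
    simp only [Multiset.card_map, nsmul_eq_mul, mul_one] at h2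
    exact le_trans h1 h2
  have hb0 : 0 ≤ b := norm_nonneg _
  have ha0 : 0 ≤ a := norm_nonneg _
  have hab : |a - b| ≤ e := le_trans (abs_norm_sub_norm_le _ _) hS
  obtain ⟨hab1, hab2⟩ := abs_le.mp hab
  refine ⟨hnpos, ?_⟩
  -- step 1: |a^2 - b^2| ≤ 3*e*m
  have h1 : |a ^ 2 - b ^ 2| ≤ 3 * e * m := by
    rw [sq_sub_sq, abs_mul]
    have h1a : |a + b| = a + b := abs_of_nonneg (by linarith)
    rw [h1a]
    nlinarith [abs_nonneg (a - b)]
  -- step 2: |a^2/n - b^2/n| ≤ 6*e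
  have h2 : |a ^ 2 / n - b ^ 2 / n| ≤ 6 * e := by
    rw [div_sub_div_same, abs_div, abs_of_pos hnpos, div_le_iff₀ hnpos]
    nlinarith
  -- step 3: |b^2/n - b^2/m| ≤ 2*e
  have h3 : |b ^ 2 / n - b ^ 2 / m| ≤ 2 * e := by
    have heq : b ^ 2 / n - b ^ 2 / m = b ^ 2 * (m - n) / (n * m) := by
      field_simp
    rw [heq, abs_div, abs_of_pos (mul_pos hnpos hm0), div_le_iff₀ (mul_pos hnpos hm0),
      abs_mul]
    have hmn : |m - n| ≤ e := by rw [abs_sub_comm]; exact hn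
    have hb2 : |b ^ 2| = b ^ 2 := abs_of_nonneg (sq_nonneg b)
    rw [hb2]
    nlinarith [mul_le_mul_of_nonneg_left hmn (sq_nonneg b), mul_le_mul hbm hbm hb0 hm0.le, abs_nonneg (m - n), mul_nonneg he.le hm0.le]
  have hdec : (V - a ^ 2 / n) - (Sv - b ^ 2 / m)
      = (V - Sv) + (-(a ^ 2 / n - b ^ 2 / n)) + (-(b ^ 2 / n - b ^ 2 / m)) := by ring
  rw [hdec]
  have htri := abs_add_three (V - Sv) (-(a ^ 2 / n - b ^ 2 / n)) (-(b ^ 2 / n - b ^ 2 / m))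
  rw [abs_neg, abs_neg] at htri
  linarith
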